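/- For x, y ∈ ℝⁿ, the maximum euclidean norm of a point on the sphere {a : ⟨a−x, y⟩ = 0, ‖a−x‖ = ‖y‖} (with y ≠ 0) equals √(‖x‖² + ‖y‖² + 2√(‖x‖²‖y‖² − ⟨x,y⟩²)). -/

import Mathlib

open scoped RealInnerProductSpace

noncomputable section

theorem stmt2 (n : ℕ) (hn : 2 ≤ n) (x y : EuclideanSpace ℝ (Fin n)) (hy : y ≠ 0) :
    IsGreatest ((fun a => ‖a‖) ''
        {a : EuclideanSpace ℝ (Fin n) | ⟪a - x, y⟫ = 0 ∧ ‖a - x‖ = ‖y‖})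
      (Real.sqrt (‖x‖ ^ 2 + ‖y‖ ^ 2 +
        2 * Real.sqrt (‖x‖ ^ 2 * ‖y‖ ^ 2 - ⟪x, y⟫ ^ 2))) := by
  have hy0 : ‖y‖ ≠ 0 := norm_ne_zero_iff.mpr hy
  have hy0' : (0:ℝ) < ‖y‖ := norm_pos_iff.mpr hy
  set c : ℝ := ⟪x, y⟫ / ‖y‖ ^ 2 with hc
  set w : EuclideanSpace ℝ (Fin n) := x - c • y with hwdef
  have hwy : ⟪w, y⟫ = 0 := by
    rw [hwdef, inner_sub_left, real_inner_smul_left, real_inner_self_eq_norm_sq, hc]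
    field_simp
    ring
  have hyw : ⟪y, w⟫ = 0 := by rw [real_inner_comm]; exact hwy
  have hxw : ⟪x, w⟫ = ‖w‖ ^ 2 := by
    have : x = w + c • y := by rw [hwdef]; abel
    rw [this, inner_add_left, real_inner_smul_left, hyw, real_inner_self_eq_norm_sq]
    ring
  have hxw2 : ⟪x, w⟫ = ‖x‖ ^ 2 - ⟪x, y⟫ ^ 2 / ‖y‖ ^ 2 := by
    rw [hwdef, inner_sub_right, real_inner_smul_right, ← real_inner_self_eq_norm_sq x, hc]
    ring
  have hw2 : ‖y‖ ^ 2 * ‖w‖ ^ 2 = ‖x‖ ^ 2 * ‖y‖ ^ 2 - ⟪x, y⟫ ^ 2 := by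
    rw [← hxw, hxw2]
    field_simp
  have hkey : Real.sqrt (‖x‖ ^ 2 * ‖y‖ ^ 2 - ⟪x, y⟫ ^ 2) = ‖y‖ * ‖w‖ := by
    rw [← hw2, show ‖y‖ ^ 2 * ‖w‖ ^ 2 = (‖y‖ * ‖w‖) ^ 2 by ring]
    exact Real.sqrt_sq (by positivity)
  rw [hkey]
  constructor
  · -- membership
    by_cases hw : w = 0
    · -- x parallel to y; pick any unit vector orthogonal to y
      have hne : (ℝ ∙ y)ᗮ ≠ ⊥ := by
        intro hb
        have h0 : Module.finrank ℝ ((ℝ ∙ y)ᗮ : Submodule ℝ (EuclideanSpace ℝ (Fin n))) = 0 := by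
          rw [hb]; simp
        have hsum := Submodule.finrank_add_finrank_orthogonal (𝕜 := ℝ) (ℝ ∙ y)
        rw [finrank_span_singleton hy, h0, finrank_euclideanSpace_fin] at hsum
        omega
      obtain ⟨u, hu, hu0⟩ := Submodule.exists_mem_ne_zero_of_ne_bot hne
      have hu0' : ‖u‖ ≠ 0 := norm_ne_zero_iff.mpr hu0
      have huy : ⟪u, y⟫ = 0 := by
        have := (Submodule.mem_orthogonal _ u).mp hu y (Submodule.mem_span_singleton_self y)
        rwa [real_inner_comm]
      refine ⟨x + (‖y‖ / ‖u‖) • u, ⟨?_, ?_⟩, ?_⟩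
      · rw [add_sub_cancel_left, real_inner_smul_left, huy, mul_zero]
      · rw [add_sub_cancel_left, norm_smul, Real.norm_eq_abs,
          abs_of_nonneg (by positivity), div_mul_cancel₀ _ hu0']
      · have hxu : ⟪x, u⟫ = 0 := by
          have hx : x = c • y := by
            have := hwdef; rw [hw] at this; linear_combination (norm := module) -this
          rw [hx, real_inner_smul_left, real_inner_comm, huy, mul_zero]
        have hnorm : ‖x + (‖y‖ / ‖u‖) • u‖ ^ 2 = ‖x‖ ^ 2 + ‖y‖ ^ 2 + 2 * (‖y‖ * ‖w‖) := by
          rw [norm_add_sq_real, real_inner_smul_right, hxu, norm_smul, Real.norm_eq_abs,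
            abs_of_nonneg (by positivity), div_mul_cancel₀ _ hu0', hw, norm_zero]
          ring
        show ‖x + (‖y‖ / ‖u‖) • u‖ = _
        rw [show ‖x + (‖y‖ / ‖u‖) • u‖ = Real.sqrt (‖x + (‖y‖ / ‖u‖) • u‖ ^ 2) from
          (Real.sqrt_sq (norm_nonneg _)).symm, hnorm]
    · have hw0' : ‖w‖ ≠ 0 := norm_ne_zero_iff.mpr hw
      refine ⟨x + (‖y‖ / ‖w‖) • w, ⟨?_, ?_⟩, ?_⟩
      · rw [add_sub_cancel_left, real_inner_smul_left, hwy, mul_zero]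
      · rw [add_sub_cancel_left, norm_smul, Real.norm_eq_abs,
          abs_of_nonneg (by positivity), div_mul_cancel₀ _ hw0']
      · have hnorm : ‖x + (‖y‖ / ‖w‖) • w‖ ^ 2 = ‖x‖ ^ 2 + ‖y‖ ^ 2 + 2 * (‖y‖ * ‖w‖) := by
          rw [norm_add_sq_real, real_inner_smul_right, hxw, norm_smul, Real.norm_eq_abs,
            abs_of_nonneg (by positivity), div_mul_cancel₀ _ hw0']
          field_simp
          ring
        show ‖x + (‖y‖ / ‖w‖) • w‖ = _
        rw [show ‖x + (‖y‖ / ‖w‖) • w‖ = Real.sqrt (‖x + (‖y‖ / ‖w‖) • w‖ ^ 2) from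
          (Real.sqrt_sq (norm_nonneg _)).symm, hnorm]
  · -- upper bound
    rintro r ⟨a, ⟨hav, han⟩, rfl⟩
    simp only
    have hbound : ⟪x, a - x⟫ ≤ ‖w‖ * ‖y‖ := by
      have hx : x = w + c • y := by rw [hwdef]; abel
      calc ⟪x, a - x⟫ = ⟪w, a - x⟫ + c * ⟪y, a - x⟫ := by
            rw [hx, inner_add_left, real_inner_smul_left]
        _ = ⟪w, a - x⟫ := by
            have h0 : ⟪y, a - x⟫ = 0 := by rw [real_inner_comm]; exact hav
            rw [h0]; ring
        _ ≤ ‖w‖ * ‖a - x‖ := real_inner_le_norm _ _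
        _ = ‖w‖ * ‖y‖ := by rw [han]
    have hsq : ‖a‖ ^ 2 ≤ ‖x‖ ^ 2 + ‖y‖ ^ 2 + 2 * (‖y‖ * ‖w‖) := by
      have : a = x + (a - x) := by abel
      rw [this, norm_add_sq_real, han]
      nlinarith [hbound]
    rw [show ‖a‖ = Real.sqrt (‖a‖ ^ 2) from (Real.sqrt_sq (norm_nonneg _)).symm]
    exact Real.sqrt_le_sqrt hsq

end
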